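/- arXiv:2104.02369 — 3 statements merged into one kernel-verified Lean document; each statement's English description precedes it below -/
import Mathlib

section
/- There is no homeomorphism φ of R^2 such that the images under φ of the two sets A = {x : |x| ≤ r1} and B = {x : r2 ≤ |x| ≤ r3} (with 0 < r1 < r2 < r3) are linearly separable, i.e., such that there exist w ∈ R^2 and k ∈ R with w·φ(a) > k for all a ∈ A and w·φ(b) < k for all b ∈ B. -/
open scoped RealInnerProductSpace

/-- No self-homeomorphism of the plane can make a disk and a surrounding annulus
linearly separable. -/
theorem disk_annulus_not_linearly_separable (r₁ r₂ r₃ : ℝ)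
    (h₁ : 0 < r₁) (h₂ : r₁ < r₂) (h₃ : r₂ < r₃) :
    ¬ ∃ (φ : EuclideanSpace ℝ (Fin 2) ≃ₜ EuclideanSpace ℝ (Fin 2))
        (w : EuclideanSpace ℝ (Fin 2)) (k : ℝ),
        (∀ a : EuclideanSpace ℝ (Fin 2), ‖a‖ ≤ r₁ → k < ⟪w, φ a⟫) ∧
        (∀ b : EuclideanSpace ℝ (Fin 2), r₂ ≤ ‖b‖ → ‖b‖ ≤ r₃ → ⟪w, φ b⟫ < k) := by
  rintro ⟨φ, w, k, hA, hB⟩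
  have hr2 : (0:ℝ) < r₂ := lt_trans h₁ h₂
  -- w ≠ 0
  have hw : w ≠ 0 := by
    rintro rfl
    have h0 := hA 0 (by simpa using h₁.le)
    have h1 := hB (EuclideanSpace.single (0 : Fin 2) r₂)
      (by simp [EuclideanSpace.norm_single, abs_of_pos hr2])
      (by simp [EuclideanSpace.norm_single, abs_of_pos hr2]; exact h₃.le)
    simp only [inner_zero_left] at h0 h1
    linarith
  have hwn : (0:ℝ) < ‖w‖ := norm_pos_iff.mpr hw
  -- the half-space and its preimage
  set H : Set (EuclideanSpace ℝ (Fin 2)) := {x | k < ⟪w, x⟫} with hH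
  set U : Set (EuclideanSpace ℝ (Fin 2)) := φ ⁻¹' H with hU
  have hHconv : Convex ℝ H := by
    have := convex_halfSpace_gt (f := fun x => ⟪w, x⟫)
      ⟨fun x y => inner_add_right w x y, fun c x => real_inner_smul_right w x c⟩ k
    exact this
  have hUconn : IsPreconnected U := by
    have heq : U = φ.symm '' H := by
      ext x
      constructor
      · intro hx; exact ⟨φ x, hx, by simp⟩
      · rintro ⟨y, hy, rfl⟩; simpa [hU] using hy
    rw [heq]
    exact (hHconv.isPreconnected).image _ φ.symm.continuous.continuousOn
  have h0U : (0 : EuclideanSpace ℝ (Fin 2)) ∈ U := hA 0 (by simpa using h₁.le)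
  -- U contains a point of norm ≥ r₂
  have hbig : ∃ x ∈ U, r₂ ≤ ‖x‖ := by
    by_contra hcon
    push_neg at hcon
    have hsub : H ⊆ φ '' (Metric.closedBall 0 r₂) := by
      intro y hy
      refine ⟨φ.symm y, ?_, by simp⟩
      have : φ.symm y ∈ U := by simpa [hU, hH] using hy
      have := (hcon _ this).le
      simpa [Metric.mem_closedBall, dist_zero_right] using this
    have hcompact : IsCompact (φ '' (Metric.closedBall 0 r₂)) :=
      (isCompact_closedBall 0 r₂).image φ.continuous
    obtain ⟨R, hR⟩ := hcompact.isBounded.subset_closedBall 0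
    -- pick a far point in H
    set t : ℝ := (|k| + 1) / ‖w‖ ^ 2 + (|R| + 1) / ‖w‖ with ht
    have hwsq : (0:ℝ) < ‖w‖ ^ 2 := by positivity
    have hmem : t • w ∈ H := by
      have : ⟪w, t • w⟫ = t * ‖w‖ ^ 2 := by
        rw [real_inner_smul_right, real_inner_self_eq_norm_sq]
      simp only [hH, Set.mem_setOf_eq, this]
      rw [ht, add_mul, div_mul_cancel₀ _ (ne_of_gt hwsq)]
      have h5 : 0 ≤ (|R| + 1) / ‖w‖ * ‖w‖ ^ 2 := by positivity
      have : k ≤ |k| := le_abs_self k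
      linarith
    have := hR (hsub hmem)
    rw [Metric.mem_closedBall, dist_zero_right, norm_smul, Real.norm_eq_abs] at this
    have ht0 : 0 < t := by positivity
    rw [abs_of_pos ht0, ht] at this
    have h6 : 0 ≤ (|k| + 1) / ‖w‖ ^ 2 * ‖w‖ := by positivity
    have h7 : (|R| + 1) / ‖w‖ * ‖w‖ = |R| + 1 := div_mul_cancel₀ _ (ne_of_gt hwn)
    have h8 : R ≤ |R| := le_abs_self R
    nlinarith
  obtain ⟨x, hxU, hx⟩ := hbig
  -- IVT: some point of U has norm r₂
  have := hUconn.intermediate_value h0U hxU (continuous_norm.continuousOn)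
  obtain ⟨b, hbU, hbnorm⟩ := this ⟨by simpa using hr2.le, by simpa using hx⟩
  simp only at hbnorm
  have h9 := hB b (le_of_eq hbnorm.symm) (by rw [hbnorm]; exact h₃.le)
  have h10 : k < ⟪w, φ b⟫ := hbU
  linarith
end

section
/- Let Q1, Q2, Q3, Q4 be the open quadrants of the square (−1,1)² (excluding the axes), and define g = 1 on Q1 ∪ Q3 and g = −1 on Q2 ∪ Q4. Then there is no continuous function φ: R² → R agreeing in sign with g on the quadrants such that the sets φ^{-1}((0,∞)) ⊇ Q1 ∪ Q3 and φ^{-1}((−∞,0)) ⊇ Q2 ∪ Q4; equivalently, the opposite-quadrant classes cannot be linearly separated after applying any homeomorphism of R². -/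
open Set

/-- Two continuous paths in `ℝ` starting at the same point `τ` and ending strictly above `τ`
must hit a common value strictly above `τ`. -/
lemma aux_ivt {G H : ℝ → ℝ} (hG : ContinuousOn G (Icc 0 1))
    (hH : ContinuousOn H (Icc 0 1)) {τ : ℝ} (hG0 : G 0 = τ) (hH0 : H 0 = τ)
    (hG1 : τ < G 1) (hH1 : τ < H 1) :
    ∃ t ∈ Icc (0:ℝ) 1, ∃ s ∈ Icc (0:ℝ) 1, G t = H s ∧ τ < G t := by
  have h1 : Icc (G 0) (G 1) ⊆ G '' Icc 0 1 := intermediate_value_Icc (by norm_num) hG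
  have h2 : Icc (H 0) (H 1) ⊆ H '' Icc 0 1 := intermediate_value_Icc (by norm_num) hH
  have hm1 : min (G 1) (H 1) ∈ Icc (G 0) (G 1) :=
    ⟨hG0 ▸ le_min hG1.le hH1.le, min_le_left _ _⟩
  have hm2 : min (G 1) (H 1) ∈ Icc (H 0) (H 1) :=
    ⟨hH0 ▸ le_min hG1.le hH1.le, min_le_right _ _⟩
  obtain ⟨t, ht, hGt⟩ := h1 hm1
  obtain ⟨s, hs, hHs⟩ := h2 hm2
  exact ⟨t, ht, s, hs, by rw [hGt, hHs], by rw [hGt]; exact lt_min hG1 hH1⟩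

/-- The opposite quadrants of the square `(-1,1)²` cannot be linearly separated after
applying any self-homeomorphism of the plane. -/
theorem quadrants_not_linearly_separable :
    ¬ ∃ (φ : (ℝ × ℝ) ≃ₜ (ℝ × ℝ)) (w : ℝ × ℝ) (k : ℝ),
        (∀ x ∈ (Set.Ioo (-1 : ℝ) 0 ×ˢ Set.Ioo (0 : ℝ) 1) ∪
              (Set.Ioo (0 : ℝ) 1 ×ˢ Set.Ioo (-1 : ℝ) 0),
          w.1 * (φ x).1 + w.2 * (φ x).2 > k) ∧
        (∀ x ∈ (Set.Ioo (0 : ℝ) 1 ×ˢ Set.Ioo (0 : ℝ) 1) ∪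
              (Set.Ioo (-1 : ℝ) 0 ×ˢ Set.Ioo (-1 : ℝ) 0),
          w.1 * (φ x).1 + w.2 * (φ x).2 < k) := by
  rintro ⟨φ, w, k, hpos, hneg⟩
  set f : ℝ × ℝ → ℝ := fun x => w.1 * (φ x).1 + w.2 * (φ x).2 with hf
  have hφc : Continuous φ := φ.continuous
  have hfc : Continuous f := by
    apply Continuous.add
    · exact continuous_const.mul (continuous_fst.comp hφc)
    · exact continuous_const.mul (continuous_snd.comp hφc)
  -- w ≠ 0
  have hw : w ≠ 0 := by
    rintro rfl
    have h1 := hpos ((-1/2 : ℝ), (1/2 : ℝ)) (Or.inl (by constructor <;> constructor <;> norm_num))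
    have h2 := hneg ((1/2 : ℝ), (1/2 : ℝ)) (Or.inl (by constructor <;> constructor <;> norm_num))
    simp at h1 h2; linarith
  -- closures of the four quadrants
  have cQ1 : closure (Ioo (-1:ℝ) 0 ×ˢ Ioo (0:ℝ) 1) = Icc (-1:ℝ) 0 ×ˢ Icc (0:ℝ) 1 := by
    rw [closure_prod_eq, closure_Ioo, closure_Ioo] <;> norm_num
  have cQ2 : closure (Ioo (0:ℝ) 1 ×ˢ Ioo (0:ℝ) 1) = Icc (0:ℝ) 1 ×ˢ Icc (0:ℝ) 1 := by
    rw [closure_prod_eq, closure_Ioo (by norm_num : (0:ℝ) ≠ 1)]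
  have cQ3 : closure (Ioo (0:ℝ) 1 ×ˢ Ioo (-1:ℝ) 0) = Icc (0:ℝ) 1 ×ˢ Icc (-1:ℝ) 0 := by
    rw [closure_prod_eq, closure_Ioo, closure_Ioo] <;> norm_num
  have cQ4 : closure (Ioo (-1:ℝ) 0 ×ˢ Ioo (-1:ℝ) 0) = Icc (-1:ℝ) 0 ×ˢ Icc (-1:ℝ) 0 := by
    rw [closure_prod_eq, closure_Ioo (by norm_num : (-1:ℝ) ≠ 0)]
  have hclosed_ge : IsClosed {x : ℝ × ℝ | k ≤ f x} := isClosed_le continuous_const hfc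
  have hclosed_le : IsClosed {x : ℝ × ℝ | f x ≤ k} := isClosed_le hfc continuous_const
  have hk1 : ∀ x ∈ Icc (-1:ℝ) 0 ×ˢ Icc (0:ℝ) 1, k ≤ f x := by
    intro x hx
    rw [← cQ1] at hx
    exact closure_minimal (fun y hy => (hpos y (Or.inl hy)).le) hclosed_ge hx
  have hk2 : ∀ x ∈ Icc (0:ℝ) 1 ×ˢ Icc (0:ℝ) 1, f x ≤ k := by
    intro x hx
    rw [← cQ2] at hx
    exact closure_minimal (fun y hy => (hneg y (Or.inl hy)).le) hclosed_le hx
  have hk3 : ∀ x ∈ Icc (0:ℝ) 1 ×ˢ Icc (-1:ℝ) 0, k ≤ f x := by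
    intro x hx
    rw [← cQ3] at hx
    exact closure_minimal (fun y hy => (hpos y (Or.inr hy)).le) hclosed_ge hx
  have hk4 : ∀ x ∈ Icc (-1:ℝ) 0 ×ˢ Icc (-1:ℝ) 0, f x ≤ k := by
    intro x hx
    rw [← cQ4] at hx
    exact closure_minimal (fun y hy => (hneg y (Or.inr hy)).le) hclosed_le hx
  -- the three arm endpoints
  set p₁ : ℝ × ℝ := ((0:ℝ), (1/2:ℝ)) with hp₁
  set p₂ : ℝ × ℝ := ((1/2:ℝ), (0:ℝ)) with hp₂
  set p₃ : ℝ × ℝ := ((-1/2:ℝ), (0:ℝ)) with hp₃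
  -- f = k along the three arms
  have harm1 : ∀ t ∈ Icc (0:ℝ) 1, f (t • p₁) = k := by
    intro t ht
    have hpt : t • p₁ = ((0:ℝ), t * (1/2)) := by
      simp [hp₁, Prod.smul_def, smul_eq_mul]
    rw [hpt]
    have h1 := hk1 ((0:ℝ), t * (1/2)) ⟨⟨by norm_num, le_refl 0⟩, ⟨by nlinarith [ht.1], by nlinarith [ht.1, ht.2]⟩⟩
    have h2 := hk2 ((0:ℝ), t * (1/2)) ⟨⟨le_refl 0, by norm_num⟩, ⟨by nlinarith [ht.1], by nlinarith [ht.1, ht.2]⟩⟩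
    linarith
  have harm2 : ∀ t ∈ Icc (0:ℝ) 1, f (t • p₂) = k := by
    intro t ht
    have hpt : t • p₂ = ((t * (1/2) : ℝ), (0:ℝ)) := by
      simp [hp₂, Prod.smul_def, smul_eq_mul]
    rw [hpt]
    have h1 := hk3 ((t * (1/2) : ℝ), (0:ℝ)) ⟨⟨by nlinarith [ht.1], by nlinarith [ht.1, ht.2]⟩, ⟨by norm_num, le_refl 0⟩⟩
    have h2 := hk2 ((t * (1/2) : ℝ), (0:ℝ)) ⟨⟨by nlinarith [ht.1], by nlinarith [ht.1, ht.2]⟩, ⟨le_refl 0, by norm_num⟩⟩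
    linarith
  have harm3 : ∀ t ∈ Icc (0:ℝ) 1, f (t • p₃) = k := by
    intro t ht
    have hpt : t • p₃ = ((t * (-1/2) : ℝ), (0:ℝ)) := by
      simp [hp₃, Prod.smul_def, smul_eq_mul]
    rw [hpt]
    have h1 := hk1 ((t * (-1/2) : ℝ), (0:ℝ)) ⟨⟨by nlinarith [ht.1, ht.2], by nlinarith [ht.1]⟩, ⟨le_refl 0, by norm_num⟩⟩
    have h2 := hk4 ((t * (-1/2) : ℝ), (0:ℝ)) ⟨⟨by nlinarith [ht.1, ht.2], by nlinarith [ht.1]⟩, ⟨by norm_num, le_refl 0⟩⟩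
    linarith
  -- the transverse coordinate g on the line {w ⬝ y = k}
  set g : ℝ × ℝ → ℝ := fun x => w.2 * (φ x).1 - w.1 * (φ x).2 with hg
  have hgc : Continuous g := by
    apply Continuous.sub
    · exact continuous_const.mul (continuous_fst.comp hφc)
    · exact continuous_const.mul (continuous_snd.comp hφc)
  -- g is injective on {f = k}
  have hinj : ∀ x y : ℝ × ℝ, f x = k → f y = k → g x = g y → x = y := by
    intro x y hx hy hxy
    have hwsq : 0 < w.1 ^ 2 + w.2 ^ 2 := by
      by_contra hcon
      push_neg at hcon
      have h1 : w.1 = 0 := by nlinarith [sq_nonneg w.1, sq_nonneg w.2]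
      have h2 : w.2 = 0 := by nlinarith [sq_nonneg w.1, sq_nonneg w.2]
      exact hw (Prod.ext h1 h2)
    have e1 : w.1 * ((φ x).1 - (φ y).1) + w.2 * ((φ x).2 - (φ y).2) = 0 := by
      simp only [hf] at hx hy; linear_combination hx - hy
    have e2 : w.2 * ((φ x).1 - (φ y).1) - w.1 * ((φ x).2 - (φ y).2) = 0 := by
      simp only [hg] at hxy; linear_combination hxy
    have u0 : (φ x).1 - (φ y).1 = 0 := by
      have h : (w.1 ^ 2 + w.2 ^ 2) * ((φ x).1 - (φ y).1) = 0 := by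
        linear_combination w.1 * e1 + w.2 * e2
      rcases mul_eq_zero.mp h with h | h
      · exact absurd h hwsq.ne'
      · exact h
    have v0 : (φ x).2 - (φ y).2 = 0 := by
      have h : (w.1 ^ 2 + w.2 ^ 2) * ((φ x).2 - (φ y).2) = 0 := by
        linear_combination w.2 * e1 - w.1 * e2
      rcases mul_eq_zero.mp h with h | h
      · exact absurd h hwsq.ne'
      · exact h
    have : φ x = φ y := Prod.ext (by linarith) (by linarith)
    exact φ.injective this
  -- paths along the arms
  have hγc : ∀ p : ℝ × ℝ, ContinuousOn (fun t : ℝ => g (t • p)) (Icc 0 1) :=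
    fun p => (hgc.comp (continuous_id.smul continuous_const)).continuousOn
  have hzero : ∀ p : ℝ × ℝ, (0:ℝ) • p = 0 := fun p => zero_smul ℝ p
  set τ : ℝ := g 0 with hτ
  have hγ0 : ∀ p : ℝ × ℝ, g ((0:ℝ) • p) = τ := fun p => by rw [hzero]
  have hf0 : f 0 = k := by
    have := harm1 0 ⟨le_refl 0, by norm_num⟩
    rwa [hzero] at this
  -- endpoint values differ from τ
  have hne : ∀ p : ℝ × ℝ, p ≠ 0 → (∀ t ∈ Icc (0:ℝ) 1, f (t • p) = k) → g p ≠ τ := by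
    intro p hp hfp h
    have hfp1 : f p = k := by have := hfp 1 ⟨by norm_num, le_refl 1⟩; rwa [one_smul] at this
    exact hp (hinj p 0 hfp1 hf0 h)
  -- the pairwise contradiction
  have pair : ∀ p q : ℝ × ℝ,
      (∀ t ∈ Icc (0:ℝ) 1, f (t • p) = k) → (∀ t ∈ Icc (0:ℝ) 1, f (t • q) = k) →
      (∀ t s : ℝ, t ∈ Icc (0:ℝ) 1 → s ∈ Icc (0:ℝ) 1 → t • p = s • q → t • p = 0) →
      ((τ < g p ∧ τ < g q) ∨ (g p < τ ∧ g q < τ)) → False := by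
    intro p q hfp hfq hcross hside
    rcases hside with ⟨h1, h2⟩ | ⟨h1, h2⟩
    · obtain ⟨t, ht, s, hs, heq, hlt⟩ :=
        aux_ivt (hγc p) (hγc q) (hγ0 p) (hγ0 q) (by rwa [one_smul]) (by rwa [one_smul])
      have := hinj (t • p) (s • q) (hfp t ht) (hfq s hs) heq
      have h0 := hcross t s ht hs this
      rw [h0] at hlt
      exact lt_irrefl _ hlt
    · obtain ⟨t, ht, s, hs, heq, hlt⟩ :=
        aux_ivt (G := fun t => -g (t • p)) (H := fun t => -g (t • q))
          ((hγc p).neg) ((hγc q).neg) (τ := -τ)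
          (by show -g ((0:ℝ) • p) = -τ; rw [hγ0])
          (by show -g ((0:ℝ) • q) = -τ; rw [hγ0])
          (by show -τ < -g ((1:ℝ) • p); rw [one_smul]; exact neg_lt_neg h1)
          (by show -τ < -g ((1:ℝ) • q); rw [one_smul]; exact neg_lt_neg h2)
      have heq' : g (t • p) = g (s • q) := by linarith [heq]
      have := hinj (t • p) (s • q) (hfp t ht) (hfq s hs) heq'
      have h0 := hcross t s ht hs this
      rw [h0] at hlt
      simp at hlt
      exact lt_irrefl _ hlt
    -- done
  -- cross conditions
  have cross12 : ∀ t s : ℝ, t ∈ Icc (0:ℝ) 1 → s ∈ Icc (0:ℝ) 1 → t • p₁ = s • p₂ → t • p₁ = 0 := by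
    intro t s _ _ h
    have h1 := congrArg Prod.fst h
    have h2 := congrArg Prod.snd h
    simp [hp₁, hp₂, Prod.smul_def, smul_eq_mul] at h1 h2
    have : t = 0 := by linarith
    rw [this, hzero]
  have cross13 : ∀ t s : ℝ, t ∈ Icc (0:ℝ) 1 → s ∈ Icc (0:ℝ) 1 → t • p₁ = s • p₃ → t • p₁ = 0 := by
    intro t s _ _ h
    have h2 := congrArg Prod.snd h
    simp [hp₁, hp₃, Prod.smul_def, smul_eq_mul] at h2
    have : t = 0 := by linarith
    rw [this, hzero]
  have cross23 : ∀ t s : ℝ, t ∈ Icc (0:ℝ) 1 → s ∈ Icc (0:ℝ) 1 → t • p₂ = s • p₃ → t • p₂ = 0 := by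
    intro t s ht hs h
    have h1 := congrArg Prod.fst h
    simp [hp₂, hp₃, Prod.smul_def, smul_eq_mul] at h1
    have : t = 0 := by nlinarith [ht.1, hs.1]
    rw [this, hzero]
  have hne1 : g p₁ ≠ τ := hne p₁ (by simp [hp₁, Prod.ext_iff]) harm1
  have hne2 : g p₂ ≠ τ := hne p₂ (by simp [hp₂, Prod.ext_iff]) harm2
  have hne3 : g p₃ ≠ τ := hne p₃ (by simp [hp₃, Prod.ext_iff]) harm3
  have c12 := pair p₁ p₂ harm1 harm2 cross12
  have c13 := pair p₁ p₃ harm1 harm3 cross13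
  have c23 := pair p₂ p₃ harm2 harm3 cross23
  rcases lt_or_gt_of_ne hne1 with h1 | h1 <;>
    rcases lt_or_gt_of_ne hne2 with h2 | h2 <;>
      rcases lt_or_gt_of_ne hne3 with h3 | h3
  · exact c12 (Or.inr ⟨h1, h2⟩)
  · exact c12 (Or.inr ⟨h1, h2⟩)
  · exact c13 (Or.inr ⟨h1, h3⟩)
  · exact c23 (Or.inl ⟨h2, h3⟩)
  · exact c23 (Or.inr ⟨h2, h3⟩)
  · exact c13 (Or.inl ⟨h1, h3⟩)
  · exact c12 (Or.inl ⟨h1, h2⟩)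
  · exact c12 (Or.inl ⟨h1, h2⟩)
end

section
/- Let y^{[l+1]} = y^{[l]} + h Σ_i β_i f(u_i^{[l]}, y_i^{[l]}) be a RK discretization of ẏ = f(u, y), l = 0,…,L−1, and consider minimizing F(y^{[L]}). If β_i ≠ 0 for all i, then stationarity of the Lagrangian yields the adjoint iteration p^{[l+1]} = p^{[l]} + h Σ_i β̃_i g_i^{[l]}, g_i^{[l]} = −(∂_y f(u_i^{[l]}, y_i^{[l]}))^T p_i^{[l]}, p_i^{[l]} = p^{[l]} + h Σ_j ã_{ij} g_j^{[l]}, with terminal condition p^{[L]} = ∇F(y^{[L]}), where β̃_i = β_i and ã_{ij} = β_j − β_j a_{ji}/β_i, together with the stationarity conditions (∂_u f(u_i^{[l]}, y_i^{[l]}))^T p_i^{[l]} = 0. -/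
open Matrix

/-- First-discretize-then-optimize for Runge–Kutta networks: if the Runge–Kutta state
equations hold and the stationarity conditions of the Lagrangian (with multipliers
`p`, `ξ`) are satisfied, then with `padj l i := ξ l i / (h βᵢ)` one obtains the
adjoint Runge–Kutta iteration with coefficients `β̃ᵢ = βᵢ`,
`ãᵢⱼ = βⱼ − βⱼ aⱼᵢ/βᵢ`, terminal condition `p^[L] = ∇F(y^[L])`, and the first-order
optimality conditions `(∂ᵤf)ᵀ pᵢ = 0`. -/
theorem rk_adjoint_from_lagrangian
    {L s d m : ℕ} (h : ℝ) (hh : h ≠ 0)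
    (A : Fin s → Fin s → ℝ) (β : Fin s → ℝ) (hβ : ∀ i, β i ≠ 0)
    (f : (Fin m → ℝ) → (Fin d → ℝ) → (Fin d → ℝ))
    -- the Jacobians of `f` with respect to the state and the control
    (Dy : (Fin m → ℝ) → (Fin d → ℝ) → Matrix (Fin d) (Fin d) ℝ)
    (Du : (Fin m → ℝ) → (Fin d → ℝ) → Matrix (Fin d) (Fin m) ℝ)
    (hDy : ∀ u y₀, HasFDerivAt (fun y => f u y)
      ((Dy u y₀).mulVecLin.toContinuousLinearMap) y₀)
    (hDu : ∀ u₀ y, HasFDerivAt (fun u => f u y)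
      ((Du u₀ y).mulVecLin.toContinuousLinearMap) u₀)
    -- cost and its gradient
    (F : (Fin d → ℝ) → ℝ) (gradF : (Fin d → ℝ) → (Fin d → ℝ))
    (hF : ∀ x, HasFDerivAt F
      (∑ k, gradF x k • (ContinuousLinearMap.proj k : (Fin d → ℝ) →L[ℝ] ℝ)) x)
    (y : Fin (L + 1) → Fin d → ℝ) (ystage : Fin L → Fin s → Fin d → ℝ)
    (u : Fin L → Fin s → Fin m → ℝ)
    (p : Fin (L + 1) → Fin d → ℝ) (ξ : Fin L → Fin s → Fin d → ℝ)
    -- Runge–Kutta state equations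
    (hstage : ∀ l i, ystage l i =
      y l.castSucc + h • ∑ j, A i j • f (u l j) (ystage l j))
    (hstate : ∀ l, y l.succ =
      y l.castSucc + h • ∑ i, β i • f (u l i) (ystage l i))
    -- stationarity of the Lagrangian in `y`
    (hstatY : ∀ l : Fin L, p l.succ =
      p l.castSucc - ∑ i, (Dy (u l i) (ystage l i))ᵀ.mulVec (ξ l i))
    (hterm : p (Fin.last L) = gradF (y (Fin.last L)))
    -- stationarity of the Lagrangian in `f_i`
    (hstatF : ∀ l i, ξ l i =
      h • (β i • p l.succ + ∑ j, A j i • (Dy (u l j) (ystage l j))ᵀ.mulVec (ξ l j)))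
    -- stationarity of the Lagrangian in `u_i`
    (hstatU : ∀ l i, (Du (u l i) (ystage l i))ᵀ.mulVec (ξ l i) = 0) :
    -- with `padj l i = ξ l i / (h β i)` and `g l i = -(∂_y f)ᵀ padj l i`:
    (∀ l : Fin L, ∀ i, (h * β i) • ((h * β i)⁻¹ • ξ l i) = ξ l i) ∧
    (∀ l : Fin L, p l.succ = p l.castSucc +
      h • ∑ i, β i • (-(Dy (u l i) (ystage l i))ᵀ.mulVec ((h * β i)⁻¹ • ξ l i))) ∧
    (∀ l : Fin L, ∀ i, (h * β i)⁻¹ • ξ l i = p l.castSucc +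
      h • ∑ j, (β j - β j * A j i / β i) •
        (-(Dy (u l j) (ystage l j))ᵀ.mulVec ((h * β j)⁻¹ • ξ l j))) ∧
    (∀ l : Fin L, ∀ i, (Du (u l i) (ystage l i))ᵀ.mulVec ((h * β i)⁻¹ • ξ l i) = 0) := by
  refine ⟨fun l i => smul_inv_smul₀ (mul_ne_zero hh (hβ i)) _, ?_, ?_,
    fun l i => by rw [Matrix.mulVec_smul, hstatU l i, smul_zero]⟩
  · intro l
    rw [hstatY l]
    funext k
    simp only [Matrix.mulVec_smul, Pi.add_apply, Pi.sub_apply, Pi.smul_apply,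
      Pi.neg_apply, Finset.sum_apply, smul_eq_mul]
    rw [Finset.mul_sum]
    have : ∀ i : Fin s, h * (β i * -((h * β i)⁻¹ *
        ((Dy (u l i) (ystage l i))ᵀ.mulVec (ξ l i) k))) =
        -((Dy (u l i) (ystage l i))ᵀ.mulVec (ξ l i) k) := by
      intro i
      have hc : h * β i * (h * β i)⁻¹ = 1 := mul_inv_cancel₀ (mul_ne_zero hh (hβ i))
      calc h * (β i * -((h * β i)⁻¹ * ((Dy (u l i) (ystage l i))ᵀ.mulVec (ξ l i) k)))
          = -(h * β i * (h * β i)⁻¹ * ((Dy (u l i) (ystage l i))ᵀ.mulVec (ξ l i) k)) := by ring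
        _ = -((Dy (u l i) (ystage l i))ᵀ.mulVec (ξ l i) k) := by rw [hc, one_mul]
    rw [Finset.sum_congr rfl fun i _ => this i, Finset.sum_neg_distrib]
    ring
  · intro l i
    have hY : p l.castSucc = p l.succ +
        ∑ j, (Dy (u l j) (ystage l j))ᵀ.mulVec (ξ l j) := by
      rw [hstatY l]; abel
    rw [hY, hstatF l i]
    funext k
    simp only [Matrix.mulVec_smul, Pi.add_apply, Pi.sub_apply, Pi.smul_apply,
      Pi.neg_apply, Finset.sum_apply, smul_eq_mul]
    rw [Finset.mul_sum, mul_add, Finset.mul_sum]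
    have key : ∀ j : Fin s,
        (h * β i)⁻¹ * (h * (A j i * (Dy (u l j) (ystage l j))ᵀ.mulVec (ξ l j) k)) =
        (Dy (u l j) (ystage l j))ᵀ.mulVec (ξ l j) k +
        h * ((β j - β j * A j i / β i) * -((h * β j)⁻¹ *
          ((Dy (u l j) (ystage l j))ᵀ.mulVec (ξ l j) k))) := by
      intro j
      field_simp [hh, hβ i, hβ j]
      ring
    have hp : (h * β i)⁻¹ * (h * (β i * p l.succ k)) = p l.succ k := by
      calc (h * β i)⁻¹ * (h * (β i * p l.succ k))
          = (h * β i)⁻¹ * (h * β i) * p l.succ k := by ring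
        _ = p l.succ k := by rw [inv_mul_cancel₀ (mul_ne_zero hh (hβ i)), one_mul]
    rw [mul_add, Finset.mul_sum, hp, add_assoc, ← Finset.sum_add_distrib]
    exact congrArg _ (Finset.sum_congr rfl fun j _ => key j)
end
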